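/- arXiv:1604.00691 — 3 statements merged into one kernel-verified Lean document; each statement's English description precedes it below -/
import Mathlib

section
/- Let g : ℝ × ℝ → ℝ be differentiable (arguments: state value and parameter θ), let x : ℝ × ℝ → ℝ be differentiable (arguments: parameter θ and time t), and let τ : ℝ → ℝ be differentiable at θ₀, such that g(x(θ, τ(θ)), θ) = 0 for all θ in a neighborhood of θ₀. Write g_x and g_θ for the partial derivatives of g evaluated at (x(θ₀, τ(θ₀)), θ₀), write f = ∂x/∂t(θ₀, τ(θ₀)) and x_θ = ∂x/∂θ(θ₀, τ(θ₀)), and suppose g_x · f ≠ 0. Then τ'(θ₀) = −(g_θ + g_x · x_θ) / (g_x · f). -/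
open Real Filter

/-- IPA event-time derivative for an endogenous event: implicitly
differentiating the guard condition `g(x(θ, τ(θ)), θ) = 0` yields
`τ'(θ₀) = −(g_θ + g_x x_θ)/(g_x f)` as long as `g_x f ≠ 0`. -/
theorem endogenous_event_time_derivative
    (g : ℝ × ℝ → ℝ) (hg : Differentiable ℝ g)
    (x : ℝ × ℝ → ℝ) (hx : Differentiable ℝ x)
    (τ : ℝ → ℝ) (θ₀ : ℝ) (hτ : DifferentiableAt ℝ τ θ₀)
    (hguard : ∀ᶠ θ in nhds θ₀, g (x (θ, τ θ), θ) = 0)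
    (gx gθ f xθ : ℝ)
    (hgx : gx = deriv (fun v => g (v, θ₀)) (x (θ₀, τ θ₀)))
    (hgθ : gθ = deriv (fun θ => g (x (θ₀, τ θ₀), θ)) θ₀)
    (hf : f = deriv (fun t => x (θ₀, t)) (τ θ₀))
    (hxθ : xθ = deriv (fun θ => x (θ, τ θ₀)) θ₀)
    (hne : gx * f ≠ 0) :
    deriv τ θ₀ = -(gθ + gx * xθ) / (gx * f) := by
  set τ' := deriv τ θ₀ with hτ'
  set Dg := fderiv ℝ g (x (θ₀, τ θ₀), θ₀) with hDg
  set Dx := fderiv ℝ x (θ₀, τ θ₀) with hDx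
  -- partial derivatives as Dg/Dx applied to basis vectors
  have hgx' : gx = Dg (1, 0) := by
    have h1 : HasDerivAt (fun v : ℝ => (v, θ₀)) ((1 : ℝ), (0 : ℝ)) (x (θ₀, τ θ₀)) :=
      HasDerivAt.prodMk (hasDerivAt_id _) (hasDerivAt_const _ _)
    have := ((hg _).hasFDerivAt.comp_hasDerivAt _ h1).deriv
    simp only [Function.comp_def] at this
    rw [hgx]; exact this
  have hgθ' : gθ = Dg (0, 1) := by
    have h1 : HasDerivAt (fun θ : ℝ => (x (θ₀, τ θ₀), θ)) ((0 : ℝ), (1 : ℝ)) θ₀ :=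
      HasDerivAt.prodMk (hasDerivAt_const _ _) (hasDerivAt_id _)
    have := ((hg _).hasFDerivAt.comp_hasDerivAt _ h1).deriv
    simp only [Function.comp_def] at this
    rw [hgθ]; exact this
  have hf' : f = Dx (0, 1) := by
    have h1 : HasDerivAt (fun t : ℝ => (θ₀, t)) ((0 : ℝ), (1 : ℝ)) (τ θ₀) :=
      HasDerivAt.prodMk (hasDerivAt_const _ _) (hasDerivAt_id _)
    have := ((hx _).hasFDerivAt.comp_hasDerivAt _ h1).deriv
    simp only [Function.comp_def] at this
    rw [hf]; exact this
  have hxθ' : xθ = Dx (1, 0) := by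
    have h1 : HasDerivAt (fun θ : ℝ => (θ, τ θ₀)) ((1 : ℝ), (0 : ℝ)) θ₀ :=
      HasDerivAt.prodMk (hasDerivAt_id _) (hasDerivAt_const _ _)
    have := ((hx _).hasFDerivAt.comp_hasDerivAt _ h1).deriv
    simp only [Function.comp_def] at this
    rw [hxθ]; exact this
  -- derivative of the composite guard function
  have h1 : HasDerivAt (fun θ => (θ, τ θ)) ((1 : ℝ), τ') θ₀ :=
    HasDerivAt.prodMk (hasDerivAt_id _) hτ.hasDerivAt
  have h2 : HasDerivAt (fun θ => x (θ, τ θ)) (Dx (1, τ')) θ₀ :=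
    (hx _).hasFDerivAt.comp_hasDerivAt _ h1
  have h3 : HasDerivAt (fun θ => (x (θ, τ θ), θ)) (Dx (1, τ'), (1 : ℝ)) θ₀ :=
    HasDerivAt.prodMk h2 (hasDerivAt_id _)
  have h4 : HasDerivAt (fun θ => g (x (θ, τ θ), θ)) (Dg (Dx (1, τ'), 1)) θ₀ :=
    (hg _).hasFDerivAt.comp_hasDerivAt _ h3
  -- the guard is eventually zero, so the derivative is zero
  have h5 : HasDerivAt (fun θ => g (x (θ, τ θ), θ)) 0 θ₀ := by
    have := (hasDerivAt_const θ₀ (0 : ℝ)).congr_of_eventuallyEq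
      (hguard.mono fun θ hθ => hθ)
    exact this
  have hzero : Dg (Dx (1, τ'), 1) = 0 := h4.unique h5
  -- expand by linearity
  have e1 : ((1 : ℝ), τ') = ((1 : ℝ), (0 : ℝ)) + τ' • ((0 : ℝ), (1 : ℝ)) := by
    simp [Prod.ext_iff]
  have hDxval : Dx (1, τ') = xθ + τ' * f := by
    rw [e1, map_add, map_smul, ← hxθ', ← hf']
    simp [smul_eq_mul]
  have e2 : ((xθ + τ' * f : ℝ), (1 : ℝ))
      = (xθ + τ' * f) • ((1 : ℝ), (0 : ℝ)) + ((0 : ℝ), (1 : ℝ)) := by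
    simp [Prod.ext_iff]
  have hkey : (xθ + τ' * f) * gx + gθ = 0 := by
    rw [hDxval, e2] at hzero
    rw [map_add, map_smul, ← hgx', ← hgθ'] at hzero
    simpa [smul_eq_mul] using hzero
  have hgx0 : gx ≠ 0 := fun h => hne (by simp [h])
  have hf0 : f ≠ 0 := fun h => hne (by simp [h])
  field_simp
  ring_nf
  ring_nf at hkey
  nlinarith [hkey]
end

section
/- Let s : ℝ × ℝ → ℝ² be differentiable (arguments: parameter θ and time t), let w ∈ ℝ², r > 0, and let τ : ℝ → ℝ be differentiable at θ₀ with ‖s(θ, τ(θ)) − w‖ = r for all θ in a neighborhood of θ₀. Let u = (s(θ₀, τ(θ₀)) − w) / ‖s(θ₀, τ(θ₀)) − w‖, and suppose ⟨u, ∂s/∂t(θ₀, τ(θ₀))⟩ ≠ 0 (Euclidean inner product). Then τ'(θ₀) = −⟨u, ∂s/∂θ(θ₀, τ(θ₀))⟩ / ⟨u, ∂s/∂t(θ₀, τ(θ₀))⟩. -/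
open Real Filter
open scoped RealInnerProductSpace

/-- IPA event-time derivative for the visit-ending event in the data
collection problem: implicitly differentiating the guard condition
`‖s(θ, τ(θ)) − w‖ = r` yields
`τ'(θ₀) = −⟨u, ∂s/∂θ⟩ / ⟨u, ∂s/∂t⟩` with `u = (s − w)/‖s − w‖`. -/
theorem visit_event_time_derivative
    (s : ℝ × ℝ → EuclideanSpace ℝ (Fin 2)) (hs : Differentiable ℝ s)
    (w : EuclideanSpace ℝ (Fin 2)) (r : ℝ) (hr : 0 < r)
    (τ : ℝ → ℝ) (θ₀ : ℝ) (hτ : DifferentiableAt ℝ τ θ₀)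
    (hguard : ∀ᶠ θ in nhds θ₀, ‖s (θ, τ θ) - w‖ = r)
    (u : EuclideanSpace ℝ (Fin 2))
    (hu : u = ‖s (θ₀, τ θ₀) - w‖⁻¹ • (s (θ₀, τ θ₀) - w))
    (hne : ⟪u, deriv (fun t => s (θ₀, t)) (τ θ₀)⟫ ≠ 0) :
    deriv τ θ₀ =
      -⟪u, deriv (fun θ => s (θ, τ θ₀)) θ₀⟫ /
        ⟪u, deriv (fun t => s (θ₀, t)) (τ θ₀)⟫ := by
  set p : ℝ × ℝ := (θ₀, τ θ₀) with hp
  have hS : HasFDerivAt s (fderiv ℝ s p) p := (hs p).hasFDerivAt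
  set S := fderiv ℝ s p
  -- partial derivatives
  have hA : HasDerivAt (fun θ => s (θ, τ θ₀)) (S (1, 0)) θ₀ := by
    have hc : HasDerivAt (fun θ : ℝ => (θ, τ θ₀)) ((1 : ℝ), (0 : ℝ)) θ₀ :=
      (hasDerivAt_id θ₀).prodMk (hasDerivAt_const θ₀ (τ θ₀))
    exact hS.comp_hasDerivAt θ₀ hc
  have hB : HasDerivAt (fun t => s (θ₀, t)) (S (0, 1)) (τ θ₀) := by
    have hc : HasDerivAt (fun t : ℝ => (θ₀, t)) ((0 : ℝ), (1 : ℝ)) (τ θ₀) :=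
      (hasDerivAt_const (τ θ₀) θ₀).prodMk (hasDerivAt_id (τ θ₀))
    exact hS.comp_hasDerivAt (τ θ₀) hc
  have hAd : deriv (fun θ => s (θ, τ θ₀)) θ₀ = S (1, 0) := hA.deriv
  have hBd : deriv (fun t => s (θ₀, t)) (τ θ₀) = S (0, 1) := hB.deriv
  -- full derivative of f θ = s (θ, τ θ)
  set f : ℝ → EuclideanSpace ℝ (Fin 2) := fun θ => s (θ, τ θ)
  have hf : HasDerivAt f (S (1, 0) + deriv τ θ₀ • S (0, 1)) θ₀ := by
    have hc : HasDerivAt (fun θ : ℝ => (θ, τ θ)) ((1 : ℝ), deriv τ θ₀) θ₀ :=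
      (hasDerivAt_id θ₀).prodMk hτ.hasDerivAt
    have := hS.comp_hasDerivAt θ₀ hc
    rw [show S (1, deriv τ θ₀) = S (1, 0) + deriv τ θ₀ • S (0, 1) from ?_] at this
    · exact this
    rw [← map_smul, ← map_add]
    congr 1
    simp [Prod.ext_iff]
  -- derivative of the squared guard
  have hg : HasDerivAt (fun θ => ⟪f θ - w, f θ - w⟫)
      (⟪f θ₀ - w, S (1, 0) + deriv τ θ₀ • S (0, 1)⟫ +
       ⟪S (1, 0) + deriv τ θ₀ • S (0, 1), f θ₀ - w⟫) θ₀ :=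
    HasDerivAt.inner ℝ (hf.sub_const w) (hf.sub_const w)
  have hconst : (fun θ => ⟪f θ - w, f θ - w⟫) =ᶠ[nhds θ₀] fun _ => r ^ 2 := by
    filter_upwards [hguard] with θ hθ
    rw [real_inner_self_eq_norm_sq, hθ]
  have hzero : ⟪f θ₀ - w, S (1, 0) + deriv τ θ₀ • S (0, 1)⟫ +
      ⟪S (1, 0) + deriv τ θ₀ • S (0, 1), f θ₀ - w⟫ = 0 := by
    have h1 : HasDerivAt (fun θ => ⟪f θ - w, f θ - w⟫) _ θ₀ := hg
    have h2 : HasDerivAt (fun _ : ℝ => r ^ 2)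
        (⟪f θ₀ - w, S (1, 0) + deriv τ θ₀ • S (0, 1)⟫ +
         ⟪S (1, 0) + deriv τ θ₀ • S (0, 1), f θ₀ - w⟫) θ₀ :=
      h1.congr_of_eventuallyEq hconst.symm
    have := h2.deriv
    rw [deriv_const] at this
    exact this.symm
  have hkey : ⟪f θ₀ - w, S (1, 0)⟫ + deriv τ θ₀ * ⟪f θ₀ - w, S (0, 1)⟫ = 0 := by
    have h2 : (2 : ℝ) * ⟪f θ₀ - w, S (1, 0) + deriv τ θ₀ • S (0, 1)⟫ = 0 := by
      rw [two_mul]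
      nth_rewrite 2 [real_inner_comm]
      exact hzero
    rw [inner_add_right, inner_smul_right] at h2
    linarith
  -- relate u-inner products
  have hnorm : ‖f θ₀ - w‖ = r := hguard.self_of_nhds
  have hrne : r ≠ 0 := ne_of_gt hr
  have huA : ⟪u, S (1, 0)⟫ = r⁻¹ * ⟪f θ₀ - w, S (1, 0)⟫ := by
    rw [hu, real_inner_smul_left]; rw [show s (θ₀, τ θ₀) = f θ₀ from rfl, hnorm]
  have huB : ⟪u, S (0, 1)⟫ = r⁻¹ * ⟪f θ₀ - w, S (0, 1)⟫ := by
    rw [hu, real_inner_smul_left]; rw [show s (θ₀, τ θ₀) = f θ₀ from rfl, hnorm]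
  rw [hAd, hBd, huA, huB]
  rw [hBd, huB] at hne
  have hBne : ⟪f θ₀ - w, S (0, 1)⟫ ≠ 0 := by
    intro h0; exact hne (by rw [h0, mul_zero])
  rw [show -(r⁻¹ * ⟪f θ₀ - w, S (1, 0)⟫) / (r⁻¹ * ⟪f θ₀ - w, S (0, 1)⟫)
      = -⟪f θ₀ - w, S (1, 0)⟫ / ⟪f θ₀ - w, S (0, 1)⟫ by
    rw [neg_div, neg_div, mul_div_mul_left _ _ (inv_ne_zero hrne)]]
  rw [eq_div_iff hBne]
  linarith
end

section
/- Let x⁻, x⁺ : ℝ × ℝ → ℝ be differentiable functions (arguments: parameter θ and time t), and let τ : ℝ → ℝ be differentiable at θ₀, such that x⁻(θ, τ(θ)) = x⁺(θ, τ(θ)) for all θ in a neighborhood of θ₀. Then ∂x⁺/∂θ(θ₀, τ(θ₀)) = ∂x⁻/∂θ(θ₀, τ(θ₀)) + [∂x⁻/∂t(θ₀, τ(θ₀)) − ∂x⁺/∂t(θ₀, τ(θ₀))] · τ'(θ₀). -/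
open Real Filter

private lemma comp_hasDerivAt (f : ℝ × ℝ → ℝ) (hf : Differentiable ℝ f)
    (τ : ℝ → ℝ) (θ₀ : ℝ) (hτ : DifferentiableAt ℝ τ θ₀) :
    HasDerivAt (fun θ => f (θ, τ θ)) (fderiv ℝ f (θ₀, τ θ₀) (1, deriv τ θ₀)) θ₀ := by
  have hg : HasDerivAt (fun θ => (θ, τ θ)) ((1 : ℝ), deriv τ θ₀) θ₀ :=
    (hasDerivAt_id θ₀).prodMk hτ.hasDerivAt
  exact (hf (θ₀, τ θ₀)).hasFDerivAt.comp_hasDerivAt θ₀ hg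

private lemma partial_theta (f : ℝ × ℝ → ℝ) (hf : Differentiable ℝ f) (θ₀ t₀ : ℝ) :
    HasDerivAt (fun θ => f (θ, t₀)) (fderiv ℝ f (θ₀, t₀) (1, 0)) θ₀ := by
  have hg : HasDerivAt (fun θ => (θ, t₀)) ((1 : ℝ), (0 : ℝ)) θ₀ :=
    (hasDerivAt_id θ₀).prodMk (hasDerivAt_const θ₀ t₀)
  exact (hf (θ₀, t₀)).hasFDerivAt.comp_hasDerivAt θ₀ hg

private lemma partial_t (f : ℝ × ℝ → ℝ) (hf : Differentiable ℝ f) (θ₀ t₀ : ℝ) :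
    HasDerivAt (fun t => f (θ₀, t)) (fderiv ℝ f (θ₀, t₀) (0, 1)) t₀ := by
  have hg : HasDerivAt (fun t => (θ₀, t)) ((0 : ℝ), (1 : ℝ)) t₀ :=
    (hasDerivAt_const t₀ θ₀).prodMk (hasDerivAt_id t₀)
  exact (hf (θ₀, t₀)).hasFDerivAt.comp_hasDerivAt t₀ hg

/-- IPA boundary condition at an event time: if the state is continuous
across the event, i.e. `x⁻(θ, τ(θ)) = x⁺(θ, τ(θ))` near `θ₀`, then the state
sensitivity jumps as `x⁺_θ = x⁻_θ + [x⁻_t − x⁺_t] τ'`. -/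
theorem ipa_state_derivative_jump
    (xm xp : ℝ × ℝ → ℝ) (hxm : Differentiable ℝ xm) (hxp : Differentiable ℝ xp)
    (τ : ℝ → ℝ) (θ₀ : ℝ) (hτ : DifferentiableAt ℝ τ θ₀)
    (hcont : ∀ᶠ θ in nhds θ₀, xm (θ, τ θ) = xp (θ, τ θ)) :
    deriv (fun θ => xp (θ, τ θ₀)) θ₀ =
      deriv (fun θ => xm (θ, τ θ₀)) θ₀ +
        (deriv (fun t => xm (θ₀, t)) (τ θ₀) - deriv (fun t => xp (θ₀, t)) (τ θ₀))
          * deriv τ θ₀ := by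
  set p := (θ₀, τ θ₀)
  have hm := comp_hasDerivAt xm hxm τ θ₀ hτ
  have hp := comp_hasDerivAt xp hxp τ θ₀ hτ
  have heq : deriv (fun θ => xm (θ, τ θ)) θ₀ = deriv (fun θ => xp (θ, τ θ)) θ₀ :=
    Filter.EventuallyEq.deriv_eq hcont
  rw [hm.deriv, hp.deriv] at heq
  have split : ∀ f : ℝ × ℝ → ℝ, Differentiable ℝ f →
      fderiv ℝ f p (1, deriv τ θ₀) = fderiv ℝ f p (1, 0) + deriv τ θ₀ * fderiv ℝ f p (0, 1) := by
    intro f hf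
    have : ((1 : ℝ), deriv τ θ₀) = (1, 0) + deriv τ θ₀ • ((0 : ℝ), (1 : ℝ)) := by
      simp [Prod.ext_iff]
    rw [this, map_add, map_smul]
    simp [smul_eq_mul]
  rw [split xm hxm, split xp hxp] at heq
  rw [(partial_theta xm hxm θ₀ (τ θ₀)).deriv, (partial_theta xp hxp θ₀ (τ θ₀)).deriv,
    (partial_t xm hxm θ₀ (τ θ₀)).deriv, (partial_t xp hxp θ₀ (τ θ₀)).deriv]
  linarith
end
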